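/- For every natural number n with 0 ≤ n ≤ 8, the function f(s) = (1 + (7−n)·e^{−2s} + e^{−4s})/(1 − e^{−2s})³, defined for s > 0, has Hilbert-series Laurent coefficients (a₀, a₁) of order 3 at s = 0 with a₀ = a₁ = (9−n)/8. -/

import Mathlib

open Filter Real Set

lemma dpq_tendsto :
    Tendsto (fun s : ℝ => (1 - Real.exp (-(2 * s))) / s) (nhdsWithin 0 (Set.Ioi 0)) (nhds 2) := by
  have hd : HasDerivAt (fun s : ℝ => 1 - Real.exp (-(2 * s))) 2 0 := by
    have h1 : HasDerivAt (fun s : ℝ => -(2 * s)) (-2) 0 := by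
      simpa [Pi.neg_def] using ((hasDerivAt_id (0:ℝ)).const_mul 2).neg
    have h2 := h1.exp
    simpa [Pi.sub_def] using (hasDerivAt_const (0:ℝ) (1:ℝ)).sub h2
  have := hasDerivAt_iff_tendsto_slope.mp hd
  have h3 : Tendsto (slope (fun s : ℝ => 1 - Real.exp (-(2 * s))) 0)
      (nhdsWithin 0 (Set.Ioi 0)) (nhds 2) :=
    this.mono_left (nhdsWithin_mono _ (fun x hx => ne_of_gt hx))
  refine h3.congr' ?_
  filter_upwards [self_mem_nhdsWithin] with s hs
  rw [slope_def_field]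
  simp

lemma dpp_tendsto :
    Tendsto (fun s : ℝ => (Real.exp (-(2 * s)) - 1 + 2 * s) / s ^ 2)
      (nhdsWithin 0 (Set.Ioi 0)) (nhds 2) := by
  have hff' : ∀ᶠ x in nhdsWithin (0:ℝ) (Set.Ioi 0),
      HasDerivAt (fun s : ℝ => Real.exp (-(2 * s)) - 1 + 2 * s)
        (-2 * Real.exp (-(2 * x)) + 2) x := by
    filter_upwards with x
    have h1 : HasDerivAt (fun s : ℝ => -(2 * s)) (-2) x := by
      simpa [Pi.neg_def] using ((hasDerivAt_id x).const_mul 2).neg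
    have h2 := h1.exp
    have h3 : HasDerivAt (fun s : ℝ => 2 * s) 2 x := by
      simpa using (hasDerivAt_id x).const_mul 2
    have := (h2.sub (hasDerivAt_const x (1:ℝ))).add h3
    convert this using 1
    · rfl
    · rfl
    · rfl
    ring
  have hgg' : ∀ᶠ x in nhdsWithin (0:ℝ) (Set.Ioi 0),
      HasDerivAt (fun s : ℝ => s ^ 2) (2 * x) x := by
    filter_upwards with x
    simpa [mul_comm] using hasDerivAt_pow 2 x
  have hg' : ∀ᶠ x in nhdsWithin (0:ℝ) (Set.Ioi 0), 2 * x ≠ 0 := by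
    filter_upwards [self_mem_nhdsWithin] with x hx
    have hx' : (0:ℝ) < x := hx
    positivity
  have hfa : Tendsto (fun s : ℝ => Real.exp (-(2 * s)) - 1 + 2 * s)
      (nhdsWithin 0 (Set.Ioi 0)) (nhds 0) := by
    have : ContinuousAt (fun s : ℝ => Real.exp (-(2 * s)) - 1 + 2 * s) 0 := by fun_prop
    have h := this.continuousWithinAt (s := Set.Ioi 0)
    simpa using h.tendsto
  have hga : Tendsto (fun s : ℝ => s ^ 2) (nhdsWithin (0:ℝ) (Set.Ioi 0)) (nhds 0) := by
    have : ContinuousAt (fun s : ℝ => s ^ 2) 0 := by fun_prop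
    simpa using (this.continuousWithinAt (s := Set.Ioi 0)).tendsto
  have hdiv : Tendsto (fun x : ℝ => (-2 * Real.exp (-(2 * x)) + 2) / (2 * x))
      (nhdsWithin (0:ℝ) (Set.Ioi 0)) (nhds 2) := by
    refine dpq_tendsto.congr' ?_
    filter_upwards [self_mem_nhdsWithin] with s hs
    rw [div_eq_div_iff (ne_of_gt (hs : (0:ℝ) < s)) (by have hs' : (0:ℝ) < s := hs; positivity)]
    ring
  exact HasDerivAt.lhopital_zero_nhdsGT hff' hgg' hg' hfa hga hdiv

/-- `f` has Hilbert-series Laurent coefficients `(a₀, a₁)` of order `n` at `s = 0`: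
`sⁿ·f(s) → a₀` and `sⁿ⁻¹·(f(s) − a₀/sⁿ) → a₁` as `s → 0⁺`. -/
def HSLaurentCoeffs (f : ℝ → ℝ) (n : ℕ) (a₀ a₁ : ℝ) : Prop :=
  Filter.Tendsto (fun s => s ^ n * f s) (nhdsWithin 0 (Set.Ioi 0)) (nhds a₀) ∧
  Filter.Tendsto (fun s => s ^ (n - 1) * (f s - a₀ / s ^ n))
    (nhdsWithin 0 (Set.Ioi 0)) (nhds a₁)

/-- The Hilbert series of the affine cone over the del Pezzo surface dPₙ (`0 ≤ n ≤ 8`),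
`f(s) = (1 + (7−n)e^{−2s} + e^{−4s})/(1 − e^{−2s})³`, has Laurent coefficients
`a₀ = a₁ = (9−n)/8` of order 3. -/
theorem del_pezzo_hs_coeffs (n : ℕ) (hn : n ≤ 8) :
    HSLaurentCoeffs
      (fun s => (1 + (7 - (n : ℝ)) * Real.exp (-(2 * s)) + Real.exp (-(4 * s)))
        / (1 - Real.exp (-(2 * s))) ^ 3)
      3 ((9 - (n : ℝ)) / 8) ((9 - (n : ℝ)) / 8) := by
  have hq := dpq_tendsto
  have hp := dpp_tendsto
  set q : ℝ → ℝ := fun s => (1 - Real.exp (-(2 * s))) / s with hqdef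
  set p : ℝ → ℝ := fun s => (Real.exp (-(2 * s)) - 1 + 2 * s) / s ^ 2 with hpdef
  have hE : Tendsto (fun s : ℝ => Real.exp (-(2 * s))) (nhdsWithin 0 (Set.Ioi 0)) (nhds 1) := by
    have h : ContinuousAt (fun s : ℝ => Real.exp (-(2 * s))) 0 := by fun_prop
    simpa using h.tendsto.mono_left nhdsWithin_le_nhds
  have hid : Tendsto (fun s : ℝ => s) (nhdsWithin (0:ℝ) (Set.Ioi 0)) (nhds 0) :=
    Filter.tendsto_id.mono_left nhdsWithin_le_nhds
  have key : ∀ s : ℝ, 0 < s →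
      s ≠ 0 ∧ 1 - Real.exp (-(2 * s)) ≠ 0 ∧
      Real.exp (-(4 * s)) = Real.exp (-(2 * s)) * Real.exp (-(2 * s)) := by
    intro s hs
    refine ⟨ne_of_gt hs, ?_, ?_⟩
    · have h1 : Real.exp (-(2 * s)) < 1 := Real.exp_lt_one_iff.mpr (by linarith)
      linarith
    · rw [← Real.exp_add]; ring_nf
  constructor
  · -- first limit
    have hlim : Tendsto
        (fun s => (9 - (n:ℝ)) * Real.exp (-(2 * s)) * ((q s)⁻¹) ^ 3 + s ^ 2 * (q s)⁻¹)
        (nhdsWithin 0 (Set.Ioi 0))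
        (nhds ((9 - (n:ℝ)) * 1 * ((2:ℝ)⁻¹) ^ 3 + 0 ^ 2 * (2:ℝ)⁻¹)) := by
      exact ((tendsto_const_nhds.mul hE).mul ((hq.inv₀ two_ne_zero).pow 3)).add
        ((hid.pow 2).mul (hq.inv₀ two_ne_zero))
    have hval : (9 - (n:ℝ)) * 1 * ((2:ℝ)⁻¹) ^ 3 + 0 ^ 2 * (2:ℝ)⁻¹ = (9 - (n:ℝ)) / 8 := by
      norm_num
      ring
    rw [hval] at hlim
    refine hlim.congr' ?_
    filter_upwards [self_mem_nhdsWithin] with s hs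
    obtain ⟨hs0, hE1, h4⟩ := key s hs
    simp only [hqdef]
    rw [h4]
    field_simp
    ring
  · -- second limit
    have hnum : Tendsto (fun s => p s * (4 + 2 * q s + (q s) ^ 2))
        (nhdsWithin (0:ℝ) (Set.Ioi 0)) (nhds (2 * (4 + 2 * 2 + 2 ^ 2))) :=
      hp.mul ((tendsto_const_nhds.add (tendsto_const_nhds.mul hq)).add (hq.pow 2))
    have hden : Tendsto (fun s => 8 * (q s) ^ 3)
        (nhdsWithin (0:ℝ) (Set.Ioi 0)) (nhds (8 * 2 ^ 3)) :=
      tendsto_const_nhds.mul (hq.pow 3)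
    have hfrac := hnum.div hden (by norm_num)
    have hq2i : Tendsto (fun s => ((q s) ^ 2)⁻¹)
        (nhdsWithin (0:ℝ) (Set.Ioi 0)) (nhds (((2:ℝ) ^ 2)⁻¹)) :=
      (hq.pow 2).inv₀ (by norm_num)
    have hlim : Tendsto
        (fun s => (9 - (n:ℝ)) * (p s * (4 + 2 * q s + (q s) ^ 2) / (8 * (q s) ^ 3)
          - ((q s) ^ 2)⁻¹) + s * (q s)⁻¹)
        (nhdsWithin 0 (Set.Ioi 0))
        (nhds ((9 - (n:ℝ)) * (2 * (4 + 2 * 2 + 2 ^ 2) / (8 * 2 ^ 3) - ((2:ℝ) ^ 2)⁻¹)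
          + 0 * (2:ℝ)⁻¹)) :=
      (tendsto_const_nhds.mul (hfrac.sub hq2i)).add (hid.mul (hq.inv₀ two_ne_zero))
    have hval : (9 - (n:ℝ)) * (2 * (4 + 2 * 2 + 2 ^ 2) / (8 * 2 ^ 3) - ((2:ℝ) ^ 2)⁻¹)
        + 0 * (2:ℝ)⁻¹ = (9 - (n:ℝ)) / 8 := by
      norm_num
      ring
    rw [hval] at hlim
    refine hlim.congr' ?_
    filter_upwards [self_mem_nhdsWithin] with s hs
    obtain ⟨hs0, hE1, h4⟩ := key s hs
    simp only [hqdef, hpdef]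
    rw [h4]
    norm_num
    field_simp
    ring
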